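/- Let Γ be a simple game and let S₁, S₂ be winning coalitions. If there exist maximal losing coalitions S₃, S₄ such that for every player p, the number of indices i ∈ {3,4} with p ∈ Sᵢ is at least the number of indices i ∈ {1,2} with p ∈ Sᵢ, then there exist losing coalitions S₃′ ⊆ S₃ and S₄′ ⊆ S₄ such that for every player p, |{i ∈ {1,2} : p ∈ Sᵢ}| = |{i ∈ {3,4} : p ∈ Sᵢ′}|. -/

import Mathlib

/-- Number of occurrences of player `p` in the pair of coalitions `(A, B)`. -/
def cnt {N : Type*} [DecidableEq N] (A B : Finset N) (p : N) : ℕ :=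
  (if p ∈ A then 1 else 0) + (if p ∈ B then 1 else 0)

/-- If `S₁, S₂` are winning and `S₃, S₄` are maximal losing coalitions such that
every player occurs in `(S₃,S₄)` at least as often as in `(S₁,S₂)`, then `S₃,S₄`
can be shrunk to losing coalitions `S₃', S₄'` making `(S₁,S₂,S₃',S₄')` a
2-trade application. -/
theorem maximal_losing_shrink_two_trade
    {N : Type*} [Fintype N] [DecidableEq N] (W : Set (Finset N))
    (hfull : Finset.univ ∈ W) (hempty : (∅ : Finset N) ∉ W)
    (hmono : ∀ S T : Finset N, S ∈ W → S ⊆ T → T ∈ W)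
    (S1 S2 S3 S4 : Finset N)
    (h1 : S1 ∈ W) (h2 : S2 ∈ W)
    (h3 : S3 ∉ W ∧ ∀ T : Finset N, S3 ⊂ T → T ∈ W)
    (h4 : S4 ∉ W ∧ ∀ T : Finset N, S4 ⊂ T → T ∈ W)
    (hge : ∀ p : N, cnt S1 S2 p ≤ cnt S3 S4 p) :
    ∃ S3' S4' : Finset N, S3' ⊆ S3 ∧ S4' ⊆ S4 ∧ S3' ∉ W ∧ S4' ∉ W ∧
      ∀ p : N, cnt S1 S2 p = cnt S3' S4' p := by
  classical
  refine ⟨S3.filter (fun p => 1 ≤ cnt S1 S2 p),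
    S4.filter (fun p => cnt S1 S2 p = 2 ∨ (cnt S1 S2 p = 1 ∧ p ∉ S3)),
    Finset.filter_subset _ _, Finset.filter_subset _ _,
    fun h => h3.1 (hmono _ _ h (Finset.filter_subset _ _)),
    fun h => h4.1 (hmono _ _ h (Finset.filter_subset _ _)),
    fun p => ?_⟩
  have := hge p
  unfold cnt
  by_cases m1 : p ∈ S1 <;> by_cases m2 : p ∈ S2 <;> by_cases m3 : p ∈ S3 <;>
    by_cases m4 : p ∈ S4 <;>
    simp only [cnt, Finset.mem_filter, m1, m2, m3, m4, if_pos, if_neg,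
      not_false_iff, if_true, if_false] at * <;> simp_all <;> omega
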